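/- For k ≥ 1 let T_k be the k×k complex matrix with diagonal (−1, −1, …, −1, 0), all superdiagonal entries equal to 1, and all other entries 0. If z ∈ ℂ satisfies z ≠ −1, z ≠ 0, and |1 + z| ≤ 1, then T_k − zI_k is invertible for every k, but the set {‖(T_k − zI_k)⁻¹‖ : k ≥ 1} of operator norms is not bounded above. -/

import Mathlib

/-- The `k×k` matrix with diagonal `(−1,…,−1,0)`, superdiagonal entries `1` and all other
entries `0`, from Example 4.3 of the paper. -/
def exampleMatrix (k : ℕ) : Matrix (Fin k) (Fin k) ℂ :=
  Matrix.of fun i j =>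
    if i = j then (if (i : ℕ) = k - 1 then 0 else -1)
    else if (j : ℕ) = (i : ℕ) + 1 then 1 else 0

noncomputable def vvec (z : ℂ) (k : ℕ) : Fin k → ℂ :=
  fun i => -((z * (1 + z) ^ (k - 1 - (i : ℕ)))⁻¹)

lemma exA_isUnit (z : ℂ) (hz1 : z ≠ -1) (hz0 : z ≠ 0) (k : ℕ) :
    IsUnit (exampleMatrix k - z • (1 : Matrix (Fin k) (Fin k) ℂ)) := by
  rw [Matrix.isUnit_iff_isUnit_det]
  have htri : (exampleMatrix k - z • (1 : Matrix (Fin k) (Fin k) ℂ)).BlockTriangular id := by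
    intro i j hij
    have h1 : ¬ (i = j) := by
      intro h; subst h; exact lt_irrefl _ hij
    have h2 : ¬ ((j : ℕ) = (i : ℕ) + 1) := by
      have : (j : ℕ) < (i : ℕ) := hij
      omega
    have h1' : ¬ (j = i) := fun h => h1 h.symm
    simp [exampleMatrix, Matrix.sub_apply, Matrix.smul_apply, Matrix.one_apply, h1, h1', h2]
  rw [Matrix.det_of_upperTriangular htri]
  rw [isUnit_iff_ne_zero]
  apply Finset.prod_ne_zero_iff.2
  intro i _
  simp only [exampleMatrix, Matrix.sub_apply, Matrix.smul_apply, Matrix.one_apply_eq, Matrix.of_apply,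
    if_pos rfl, smul_eq_mul, mul_one]
  by_cases h : (i : ℕ) = k - 1 <;> simp [h]
  · exact hz0
  · intro hc
    apply hz1
    linear_combination -hc

lemma exA_mulVec (z : ℂ) (hz1 : z ≠ -1) (hz0 : z ≠ 0) (k : ℕ) (hk : 1 ≤ k) :
    (exampleMatrix k - z • (1 : Matrix (Fin k) (Fin k) ℂ)).mulVec (vvec z k)
      = Pi.single (⟨k - 1, by omega⟩ : Fin k) 1 := by
  have hw : (1 : ℂ) + z ≠ 0 := by
    intro h; apply hz1; linear_combination h
  funext i
  simp only [Matrix.mulVec, dotProduct]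
  by_cases hi : (i : ℕ) = k - 1
  · -- last row
    have hie : i = (⟨k - 1, by omega⟩ : Fin k) := Fin.ext hi
    rw [Finset.sum_eq_single i]
    · simp only [exampleMatrix, Matrix.sub_apply, Matrix.smul_apply, Matrix.one_apply_eq,
        Matrix.of_apply, if_pos rfl, if_pos hi, smul_eq_mul, mul_one, vvec, hi, Nat.sub_self,
        pow_zero, mul_one]
      rw [hie, Pi.single_eq_same]
      field_simp
      simp
    · intro j _ hj
      have h2 : ¬ ((j : ℕ) = (i : ℕ) + 1) := by omega
      have h1 : ¬ (i = j) := fun h => hj h.symm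
      simp [exampleMatrix, Matrix.sub_apply, Matrix.smul_apply, Matrix.one_apply, h1, h2]
    · simp
  · -- not last row
    have hilt : (i : ℕ) + 1 < k := by omega
    set i' : Fin k := ⟨(i : ℕ) + 1, hilt⟩ with hi'
    have hne : i ≠ i' := by
      intro h
      have := congrArg (Fin.val) h
      simp [hi'] at this
    have hsub : ({i, i'} : Finset (Fin k)) ⊆ Finset.univ := Finset.subset_univ _
    rw [← Finset.sum_subset hsub]
    · rw [Finset.sum_pair hne]
      have hAi : (exampleMatrix k - z • (1 : Matrix (Fin k) (Fin k) ℂ)) i i = -1 - z := by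
        simp [exampleMatrix, Matrix.sub_apply, Matrix.smul_apply, Matrix.one_apply_eq, hi]
      have hAi' : (exampleMatrix k - z • (1 : Matrix (Fin k) (Fin k) ℂ)) i i' = 1 := by
        simp [exampleMatrix, Matrix.sub_apply, Matrix.smul_apply, Matrix.one_apply, hne, hi', Fin.ext_iff]
      rw [hAi, hAi']
      have hm : k - 1 - (i : ℕ) = (k - 1 - ((i' : ℕ))) + 1 := by
        simp [hi']; omega
      have hsingle : (Pi.single (⟨k - 1, by omega⟩ : Fin k) (1:ℂ) : Fin k → ℂ) i = 0 := by
        apply Pi.single_eq_of_ne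
        intro h
        exact hi (congrArg Fin.val h)
      rw [hsingle]
      simp only [vvec, hm, one_mul]
      set m := k - 1 - ((i' : ℕ))
      rw [pow_succ]
      field_simp
      ring
    · intro j _ hj
      simp only [Finset.mem_insert, Finset.mem_singleton, not_or] at hj
      have h1 : i ≠ j := fun h => hj.1 h.symm
      have h2 : ¬ ((j : ℕ) = (i : ℕ) + 1) := by
        intro h
        exact hj.2 (Fin.ext (by simp [hi', h]))
      simp [exampleMatrix, Matrix.sub_apply, Matrix.smul_apply, Matrix.one_apply, h1, h2]

lemma exA_norm_lb (z : ℂ) (hz1 : z ≠ -1) (hz0 : z ≠ 0) (hz : ‖1 + z‖ ≤ 1)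
    (k : ℕ) (hk : 1 ≤ k) :
    Real.sqrt k * ‖z‖⁻¹ ≤
      ‖Matrix.toEuclideanCLM (𝕜 := ℂ)
        ((exampleMatrix k - z • (1 : Matrix (Fin k) (Fin k) ℂ))⁻¹)‖ := by
  set A := exampleMatrix k - z • (1 : Matrix (Fin k) (Fin k) ℂ) with hA_def
  have hA := exA_isUnit z hz1 hz0 k
  have hdet : IsUnit A.det := (Matrix.isUnit_iff_isUnit_det A).mp hA
  have hBA : A⁻¹ * A = 1 := Matrix.nonsing_inv_mul A hdet
  have hBv : (A⁻¹).mulVec (Pi.single (⟨k - 1, by omega⟩ : Fin k) 1) = vvec z k := by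
    conv_lhs => rw [← exA_mulVec z hz1 hz0 k hk]
    rw [Matrix.mulVec_mulVec, hBA, Matrix.one_mulVec]
  set x : EuclideanSpace ℂ (Fin k) :=
    (WithLp.equiv 2 (Fin k → ℂ)).symm (Pi.single (⟨k - 1, by omega⟩ : Fin k) 1) with hx_def
  have hx : ‖x‖ = 1 := by
    have h1 : x = EuclideanSpace.single (⟨k - 1, by omega⟩ : Fin k) (1 : ℂ) := rfl
    rw [h1, EuclideanSpace.norm_single]; norm_num
  have happ : Matrix.toEuclideanCLM (𝕜 := ℂ) A⁻¹ x
      = (WithLp.equiv 2 (Fin k → ℂ)).symm (vvec z k) := by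
    rw [hx_def, WithLp.equiv_symm_apply, Matrix.toEuclideanCLM_toLp, hBv]
  have hnorm : Real.sqrt k * ‖z‖⁻¹ ≤ ‖(WithLp.equiv 2 (Fin k → ℂ)).symm (vvec z k)‖ := by
    rw [EuclideanSpace.norm_eq]
    have hterm : ∀ i : Fin k, (‖z‖⁻¹) ^ 2 ≤ ‖vvec z k i‖ ^ 2 := by
      intro i
      have hv : ‖vvec z k i‖ = (‖z‖ * ‖(1 + z)‖ ^ (k - 1 - (i : ℕ)))⁻¹ := by
        simp [vvec, norm_mul, norm_pow]
      have hwle : ‖(1 + z)‖ ^ (k - 1 - (i : ℕ)) ≤ 1 := by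
        apply pow_le_one₀ (norm_nonneg _)
        exact hz
      have hle : ‖z‖⁻¹ ≤ ‖vvec z k i‖ := by
        rw [hv]
        have hzpos : 0 < ‖z‖ := norm_pos_iff.mpr hz0
        have hw : (1 : ℂ) + z ≠ 0 := fun h => hz1 (by linear_combination h)
        apply inv_anti₀
        · exact mul_pos hzpos (pow_pos (norm_pos_iff.mpr hw) _)
        · calc ‖z‖ * ‖(1 + z)‖ ^ (k - 1 - (i : ℕ)) ≤ ‖z‖ * 1 := by
                apply mul_le_mul_of_nonneg_left hwle (le_of_lt hzpos)
            _ = ‖z‖ := mul_one _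
      exact pow_le_pow_left₀ (by positivity) hle 2
    have hsum : (k : ℝ) * (‖z‖⁻¹) ^ 2 ≤ ∑ i : Fin k,
        ‖((WithLp.equiv 2 (Fin k → ℂ)).symm (vvec z k)) i‖ ^ 2 := by
      have : ∑ _i : Fin k, (‖z‖⁻¹) ^ 2 ≤ ∑ i : Fin k,
          ‖((WithLp.equiv 2 (Fin k → ℂ)).symm (vvec z k)) i‖ ^ 2 := by
        apply Finset.sum_le_sum
        intro i _
        exact hterm i
      simpa using this
    calc Real.sqrt k * ‖z‖⁻¹ = Real.sqrt ((k : ℝ) * (‖z‖⁻¹) ^ 2) := by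
          rw [Real.sqrt_mul (by positivity), Real.sqrt_sq (by positivity)]
      _ ≤ _ := Real.sqrt_le_sqrt hsum
  calc Real.sqrt k * ‖z‖⁻¹ ≤ ‖Matrix.toEuclideanCLM (𝕜 := ℂ) A⁻¹ x‖ := by
        rw [happ]; exact hnorm
    _ ≤ ‖Matrix.toEuclideanCLM (𝕜 := ℂ) A⁻¹‖ * ‖x‖ := ContinuousLinearMap.le_opNorm _ _
    _ = ‖Matrix.toEuclideanCLM (𝕜 := ℂ) A⁻¹‖ := by rw [hx, mul_one]

/-- Unbounded direction of the spectrum computation in Example 4.3: if `z ∉ {−1,0}` and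
`|1 + z| ≤ 1`, then `T_k − zI` is invertible for every `k ≥ 1`, but the ℓ²-operator norms
of the inverses are not bounded above. -/
theorem example_resolvent_unbounded
    (z : ℂ) (hz1 : z ≠ -1) (hz0 : z ≠ 0) (hz : ‖1 + z‖ ≤ 1) :
    (∀ k : ℕ, 1 ≤ k → IsUnit (exampleMatrix k - z • (1 : Matrix (Fin k) (Fin k) ℂ))) ∧
    ¬ ∃ C : ℝ, ∀ k : ℕ, 1 ≤ k →
      ‖Matrix.toEuclideanCLM (𝕜 := ℂ)
        ((exampleMatrix k - z • (1 : Matrix (Fin k) (Fin k) ℂ))⁻¹)‖ ≤ C := by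
  constructor
  · intro k _
    exact exA_isUnit z hz1 hz0 k
  · rintro ⟨C, hC⟩
    obtain ⟨k, hk⟩ := exists_nat_gt ((max C 0 * ‖z‖) ^ 2)
    have hk1 : 1 ≤ k := by
      by_contra h
      have : k = 0 := by omega
      subst this
      have : (0 : ℝ) ≤ (max C 0 * ‖z‖) ^ 2 := by positivity
      simpa using lt_of_le_of_lt this hk
    have hzpos : 0 < ‖z‖ := norm_pos_iff.mpr hz0
    have h1 : Real.sqrt k * ‖z‖⁻¹ ≤ C := le_trans (exA_norm_lb z hz1 hz0 hz k hk1) (hC k hk1)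
    have h2 : max C 0 * ‖z‖ < Real.sqrt k := by
      have := Real.sqrt_lt_sqrt (by positivity) hk
      rwa [Real.sqrt_sq (by positivity)] at this
    have h3 : C < Real.sqrt k * ‖z‖⁻¹ := by
      have : max C 0 < Real.sqrt k * ‖z‖⁻¹ := by
        calc max C 0 = max C 0 * ‖z‖ * ‖z‖⁻¹ := by rw [mul_assoc, mul_inv_cancel₀ (ne_of_gt hzpos), mul_one]
          _ < Real.sqrt k * ‖z‖⁻¹ := mul_lt_mul_of_pos_right h2 (by positivity)
      exact lt_of_le_of_lt (le_max_left C 0) this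
    linarith
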